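/- Let p be a prime and let P be a finite cyclic group whose order is a power of p. Let u and u' be automorphisms of P whose orders are coprime to p. If there exists a group isomorphism f : P ⋊ ⟨u⟩ ≃ P ⋊ ⟨u'⟩ such that f(û) is conjugate in P ⋊ ⟨u'⟩ to û', then u = u'. -/

import Mathlib

open SemidirectProduct Subgroup

/-- Any two automorphisms of a cyclic group commute. -/
private lemma mulAut_comm_of_isCyclic {Q : Type*} [Group Q] [IsCyclic Q]
    (σ τ : MulAut Q) : σ * τ = τ * σ := by
  obtain ⟨m, hm0⟩ := MonoidHom.map_cyclic σ.toMonoidHom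
  obtain ⟨k, hk0⟩ := MonoidHom.map_cyclic τ.toMonoidHom
  have hm : ∀ g : Q, σ g = g ^ m := hm0
  have hk : ∀ g : Q, τ g = g ^ k := hk0
  ext g
  show σ (τ g) = τ (σ g)
  calc σ (τ g) = (τ g) ^ m := hm _
    _ = (g ^ k) ^ m := by rw [hk]
    _ = (g ^ m) ^ k := by rw [← zpow_mul, ← zpow_mul, mul_comm]
    _ = (σ g) ^ k := by rw [hm]
    _ = τ (σ g) := (hk _).symm

/-- In `Q ⋊ ⟨v⟩` with `v` of order coprime to `p` and `Q` a `p`-group, any element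
of `p`-power order has trivial right component. -/
private lemma right_eq_one_of_orderOf_pPow (p : ℕ) {Q : Type*} [Group Q]
    (v : MulAut Q) (hv : Nat.Coprime (orderOf v) p)
    (g : SemidirectProduct Q ↥(Subgroup.zpowers v) ((Subgroup.zpowers v).subtype))
    (hg : ∃ k, orderOf g = p ^ k) : g.right = 1 := by
  obtain ⟨k, hk⟩ := hg
  have h1 : orderOf (SemidirectProduct.rightHom g) ∣ p ^ k :=
    hk ▸ orderOf_map_dvd _ g
  obtain ⟨m, hm⟩ := Subgroup.mem_zpowers_iff.mp (SemidirectProduct.rightHom g).2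
  have hpow : (SemidirectProduct.rightHom g) ^ orderOf v = 1 := by
    apply Subtype.ext
    show (((SemidirectProduct.rightHom g) ^ orderOf v : Subgroup.zpowers v) : MulAut Q) = 1
    rw [SubmonoidClass.coe_pow, ← hm, ← zpow_natCast, ← zpow_mul, mul_comm, zpow_mul,
      zpow_natCast, pow_orderOf_eq_one, one_zpow]
  have h2 : orderOf (SemidirectProduct.rightHom g) ∣ orderOf v :=
    orderOf_dvd_of_pow_eq_one hpow
  have : orderOf (SemidirectProduct.rightHom g) ∣ 1 := by
    have hcop : Nat.Coprime (orderOf v) (p ^ k) := hv.pow_right k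
    exact hcop ▸ Nat.dvd_gcd h2 h1
  have := orderOf_eq_one_iff.mp (Nat.dvd_one.mp this)
  simpa [SemidirectProduct.rightHom] using this

/-- Conjugation inside `Q ⋊ ⟨v⟩` (for abelian `Q`) acts on `inl Q` through the right
component. -/
private lemma conj_inl {Q : Type*} [Group Q] (hc : ∀ a b : Q, a * b = b * a)
    (v : MulAut Q)
    (h : SemidirectProduct Q ↥(Subgroup.zpowers v) ((Subgroup.zpowers v).subtype)) (x : Q) :
    h * SemidirectProduct.inl x * h⁻¹ =
      SemidirectProduct.inl ((h.right : MulAut Q) x) := by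
  have e1 : SemidirectProduct.inr h.right * SemidirectProduct.inl x *
      (SemidirectProduct.inr h.right)⁻¹ =
      (SemidirectProduct.inl ((h.right : MulAut Q) x) :
        SemidirectProduct Q ↥(Subgroup.zpowers v) ((Subgroup.zpowers v).subtype)) :=
    by rw [← map_inv]
       exact (SemidirectProduct.inl_aut h.right x).symm
  have hrep : h = SemidirectProduct.inl h.left * SemidirectProduct.inr h.right :=
    (SemidirectProduct.inl_left_mul_inr_right h).symm
  conv_lhs => rw [hrep]
  calc (SemidirectProduct.inl h.left * SemidirectProduct.inr h.right) *
        SemidirectProduct.inl x *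
        (SemidirectProduct.inl h.left * SemidirectProduct.inr h.right)⁻¹
      = SemidirectProduct.inl h.left *
        (SemidirectProduct.inr h.right * SemidirectProduct.inl x *
          (SemidirectProduct.inr h.right)⁻¹) * (SemidirectProduct.inl h.left)⁻¹ := by
        group
    _ = SemidirectProduct.inl h.left *
        SemidirectProduct.inl ((h.right : MulAut Q) x) *
        (SemidirectProduct.inl h.left)⁻¹ := by rw [e1]
    _ = SemidirectProduct.inl (h.left * (h.right : MulAut Q) x * h.left⁻¹) := by
        rw [← map_inv, ← map_mul, ← map_mul]
    _ = SemidirectProduct.inl ((h.right : MulAut Q) x) := by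
        rw [hc h.left, mul_inv_cancel_right]

/-- For a finite cyclic `p`-group `P` and automorphisms `u, u'` of `P` of order coprime
to `p`, if there is a group isomorphism `P ⋊ ⟨u⟩ ≃* P ⋊ ⟨u'⟩` carrying `û` to a
conjugate of `û'`, then `u = u'`. -/
theorem cyclic_pGroup_pair_iso_iff_eq
    (p : ℕ) (hp : p.Prime) (P : Type*) [Group P] [Finite P] [IsCyclic P]
    (hP : ∃ n : ℕ, Nat.card P = p ^ n)
    (u u' : MulAut P)
    (hu : Nat.Coprime (orderOf u) p) (hu' : Nat.Coprime (orderOf u') p)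
    (f : SemidirectProduct P ↥(Subgroup.zpowers u) ((Subgroup.zpowers u).subtype) ≃*
         SemidirectProduct P ↥(Subgroup.zpowers u') ((Subgroup.zpowers u').subtype))
    (hf : IsConj (f (SemidirectProduct.inr ⟨u, Subgroup.mem_zpowers u⟩))
      (SemidirectProduct.inr ⟨u', Subgroup.mem_zpowers u'⟩)) :
    u = u' := by
  obtain ⟨n, hn⟩ := hP
  have hPcomm : ∀ a b : P, a * b = b * a :=
    fun a b => (IsCyclic.commGroup (α := P)).mul_comm a b
  -- orders of elements of `P` are `p`-powers
  have hord : ∀ x : P, ∃ k, orderOf x = p ^ k := fun x => by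
    obtain ⟨k, -, hk⟩ := (Nat.dvd_prime_pow hp).1 (hn ▸ orderOf_dvd_natCard x)
    exact ⟨k, hk⟩
  -- `f` maps `inl P` into `inl P`
  have key : ∀ x : P, f (SemidirectProduct.inl x) =
      SemidirectProduct.inl ((f (SemidirectProduct.inl x)).left) := by
    intro x
    have h1 : (f (SemidirectProduct.inl x)).right = 1 := by
      apply right_eq_one_of_orderOf_pPow p u' hu'
      obtain ⟨k, hk⟩ := hord x
      exact ⟨k, by
        rw [f.orderOf_eq,
          orderOf_injective SemidirectProduct.inl SemidirectProduct.inl_injective, hk]⟩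
    ext
    · rfl
    · rw [SemidirectProduct.right_inl, h1]
  set φfun : P → P := fun x => (f (SemidirectProduct.inl x)).left with hφfun
  have hφ : ∀ x, f (SemidirectProduct.inl x) = SemidirectProduct.inl (φfun x) := key
  have hφmul : ∀ x y, φfun (x * y) = φfun x * φfun y := by
    intro x y
    apply SemidirectProduct.inl_injective (φ := (Subgroup.zpowers u').subtype)
    rw [← hφ, map_mul, map_mul, hφ, hφ, ← map_mul]
  have hφinj : Function.Injective φfun := by
    intro x y hxy
    apply SemidirectProduct.inl_injective (f.injective ?_)
    rw [hφ, hφ, hxy]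
  have hφsurj : Function.Surjective φfun := by
    intro y
    set g := f.symm (SemidirectProduct.inl y) with hg
    have h1 : g.right = 1 := by
      apply right_eq_one_of_orderOf_pPow p u hu
      obtain ⟨k, hk⟩ := hord y
      exact ⟨k, by
        rw [hg, f.symm.orderOf_eq,
          orderOf_injective SemidirectProduct.inl SemidirectProduct.inl_injective, hk]⟩
    have h2 : g = SemidirectProduct.inl g.left := by
      ext
      · rfl
      · rw [SemidirectProduct.right_inl, h1]
    refine ⟨g.left, ?_⟩
    apply SemidirectProduct.inl_injective (φ := (Subgroup.zpowers u').subtype)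
    rw [← hφ, ← h2, hg, f.apply_symm_apply]
  let φhom : P →* P :=
    { toFun := φfun
      map_one' := by
        apply SemidirectProduct.inl_injective (φ := (Subgroup.zpowers u').subtype)
        rw [← hφ]; simp
      map_mul' := hφmul }
  let ψ : MulAut P := MulEquiv.ofBijective φhom ⟨hφinj, hφsurj⟩
  -- conjugacy data
  obtain ⟨c, hc⟩ := isConj_iff.1 hf
  set uhat : SemidirectProduct P ↥(Subgroup.zpowers u) ((Subgroup.zpowers u).subtype) :=
    SemidirectProduct.inr ⟨u, Subgroup.mem_zpowers u⟩ with huhat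
  -- the right component of `f uhat` is `u'`
  have hw : ((f uhat).right : MulAut P) = u' := by
    set rH : SemidirectProduct P ↥(Subgroup.zpowers u') ((Subgroup.zpowers u').subtype) →*
        ↥(Subgroup.zpowers u') := SemidirectProduct.rightHom with hrH
    have h1 : rH (c * f uhat * c⁻¹) =
        rH (SemidirectProduct.inr (⟨u', Subgroup.mem_zpowers u'⟩ : Subgroup.zpowers u')) := by
      rw [hc]
    rw [map_mul, map_mul, map_inv, hrH, SemidirectProduct.rightHom_inr] at h1
    -- elements of `zpowers u'` commute
    obtain ⟨i, hi⟩ := Subgroup.mem_zpowers_iff.mp (rH c).2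
    obtain ⟨j, hj⟩ := Subgroup.mem_zpowers_iff.mp (rH (f uhat)).2
    have hcomm : rH c * rH (f uhat) = rH (f uhat) * rH c := by
      apply Subtype.ext
      push_cast
      rw [← hi, ← hj, zpow_mul_comm]
    rw [hcomm, mul_inv_cancel_right] at h1
    have := congrArg (fun z : Subgroup.zpowers u' => (z : MulAut P)) h1
    exact this
  -- the semiconjugacy relation on `P`
  have hsemi : ∀ x : P, u' (φfun x) = φfun (u x) := by
    intro x
    have e1 : f uhat * f (SemidirectProduct.inl x) * (f uhat)⁻¹ =
        f (SemidirectProduct.inl (u x)) := by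
      rw [← map_inv, ← map_mul, ← map_mul]
      congr 1
      rw [huhat, ← map_inv]
      exact (SemidirectProduct.inl_aut
        (⟨u, Subgroup.mem_zpowers u⟩ : Subgroup.zpowers u) x).symm
    rw [hφ, hφ] at e1
    rw [conj_inl hPcomm u' (f uhat) (φfun x), hw] at e1
    exact SemidirectProduct.inl_injective e1
  -- conclude using commutativity of `MulAut P`
  have hmul : u' * ψ = ψ * u := by
    apply MulEquiv.ext
    intro x
    exact hsemi x
  have := mulAut_comm_of_isCyclic ψ u'
  rw [← this] at hmul
  exact mul_left_cancel hmul.symm
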